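/- Let (ρ, W_ρ) be an irreducible unitary representation of Spin(n) and let W_λ be an irreducible summand of W_ρ ⊗ ℂⁿ with orthogonal projection Π. Define Clifford homomorphisms p_λ(X)φ := Π(φ ⊗ X). Then for any orthonormal basis {eᵢ} of ℝⁿ, (1) Σᵢ p_λ(eᵢ)* p_λ(eᵢ) = (dim W_λ / dim W_ρ)·Id on W_ρ, and (2) Σᵢ p_λ(eᵢ) p_λ(eᵢ)* = Id on W_λ. -/

import Mathlib

open scoped ComplexInnerProductSpace
open LinearMap

namespace CliffordAux

noncomputable section
set_option linter.unusedSectionVars false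
variable {n : ℕ} {W : Type*} [NormedAddCommGroup W] [InnerProductSpace ℂ W] [FiniteDimensional ℂ W]

lemma pilp_sum_apply {ι' : Type*} (s : Finset ι') (F : ι' → PiLp 2 (fun _ : Fin n => W))
    (j : Fin n) : (∑ i ∈ s, F i) j = ∑ i ∈ s, F i j :=
  map_sum (PiLp.projₗ 2 (fun _ : Fin n => W) (𝕜 := ℂ) j) F s

/-- φ ⊗ X as a linear map in φ. -/
def iota (X : EuclideanSpace ℝ (Fin n)) : W →ₗ[ℂ] PiLp 2 (fun _ : Fin n => W) :=
  (WithLp.linearEquiv 2 ℂ (∀ _ : Fin n, W)).symm.toLinearMap ∘ₗ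
    LinearMap.pi (fun i => ((X i : ℝ) : ℂ) • LinearMap.id)

@[simp] lemma iota_apply (X : EuclideanSpace ℝ (Fin n)) (φ : W) (i : Fin n) :
    iota X φ i = ((X i : ℝ) : ℂ) • φ := rfl

lemma iota_eq (X : EuclideanSpace ℝ (Fin n)) (φ : W) :
    iota X φ = (WithLp.equiv 2 (∀ _ : Fin n, W)).symm fun i => ((X i : ℝ) : ℂ) • φ := rfl

lemma adjoint_iota_apply (X : EuclideanSpace ℝ (Fin n)) (f : PiLp 2 (fun _ : Fin n => W)) :
    adjoint (iota X) f = ∑ i, ((X i : ℝ) : ℂ) • f i := by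
  have h : ∀ φ : W,
      ⟪φ, adjoint (iota X) f⟫ = ⟪φ, ∑ i, ((X i : ℝ) : ℂ) • f i⟫ := by
    intro φ
    rw [LinearMap.adjoint_inner_right, PiLp.inner_apply, inner_sum]
    refine Finset.sum_congr rfl fun i _ => ?_
    rw [iota_apply, inner_smul_left, inner_smul_right, Complex.conj_ofReal]
  exact ext_inner_left ℂ h

lemma onb_delta (b : OrthonormalBasis (Fin n) ℝ (EuclideanSpace ℝ (Fin n))) (j k : Fin n) :
    ∑ i, (b i j) * (b i k) = if j = k then (1:ℝ) else 0 := by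
  have h := b.sum_inner_mul_inner (EuclideanSpace.single j 1) (EuclideanSpace.single k 1)
  simp only [EuclideanSpace.inner_single_left, EuclideanSpace.inner_single_right,
    starRingEnd_apply, star_one, one_mul, star_trivial, mul_one] at h
  rw [h]
  simp [EuclideanSpace.inner_single_left, EuclideanSpace.single_apply, eq_comm]

lemma onb_delta_c (b : OrthonormalBasis (Fin n) ℝ (EuclideanSpace ℝ (Fin n))) (j k : Fin n) :
    ∑ i, ((b i j : ℝ) : ℂ) * ((b i k : ℝ) : ℂ) = if j = k then (1:ℂ) else 0 := by
  have h := onb_delta b j k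
  calc ∑ i, ((b i j : ℝ):ℂ) * ((b i k : ℝ):ℂ)
      = ((∑ i, b i j * b i k : ℝ) : ℂ) := by push_cast; rfl
    _ = _ := by rw [h]; split <;> simp

/-- Σ_i ι(b_i) ∘ ι(b_i)* = id. -/
lemma sum_iota_comp_adjoint (b : OrthonormalBasis (Fin n) ℝ (EuclideanSpace ℝ (Fin n))) :
    ∑ i, iota (n := n) (W := W) (b i) ∘ₗ adjoint (iota (b i)) = LinearMap.id := by
  ext f j
  rw [LinearMap.sum_apply, pilp_sum_apply]
  have : ∀ i, ((iota (n := n) (W := W) (b i) ∘ₗ adjoint (iota (b i))) f) j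
      = ∑ k, (((b i j : ℝ):ℂ) * ((b i k : ℝ):ℂ)) • f k := by
    intro i
    rw [LinearMap.comp_apply, adjoint_iota_apply, iota_apply, Finset.smul_sum]
    exact Finset.sum_congr rfl fun k _ => by rw [smul_smul]
  rw [Finset.sum_congr rfl fun i _ => this i, Finset.sum_comm]
  have : ∀ k, ∑ i, (((b i j : ℝ):ℂ) * ((b i k : ℝ):ℂ)) • f k
      = (if j = k then (1:ℂ) else 0) • f k := by
    intro k
    rw [← Finset.sum_smul, onb_delta_c]
  rw [Finset.sum_congr rfl fun k _ => this k]
  simp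

/-- canonical form: Σ_i ι(b_i)* ∘ M ∘ ι(b_i) is basis independent. -/
lemma sum_adjoint_comp_M_comp_iota (b : OrthonormalBasis (Fin n) ℝ (EuclideanSpace ℝ (Fin n)))
    (M : PiLp 2 (fun _ : Fin n => W) →ₗ[ℂ] PiLp 2 (fun _ : Fin n => W)) (φ : W) :
    (∑ i, adjoint (iota (b i)) ∘ₗ M ∘ₗ iota (b i)) φ
      = ∑ k, (M (iota (EuclideanSpace.single k 1) φ)) k := by
  have hiota : ∀ X : EuclideanSpace ℝ (Fin n), iota (W := W) X φ
      = ∑ k, ((X k : ℝ) : ℂ) • iota (EuclideanSpace.single k 1) φ := by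
    intro X
    have : ∀ j, (iota (W := W) X φ) j = (∑ k, ((X k : ℝ):ℂ) • iota (EuclideanSpace.single k 1) φ) j := by
      intro j
      rw [pilp_sum_apply]
      simp only [iota_apply, PiLp.smul_apply]
      have : ∀ k, ((X k : ℝ):ℂ) • (((EuclideanSpace.single k 1 : EuclideanSpace ℝ (Fin n)) j : ℝ):ℂ) • φ
          = (if j = k then ((X k : ℝ):ℂ) else 0) • φ := by
        intro k
        rw [smul_smul, EuclideanSpace.single_apply]
        split <;> simp
      rw [Finset.sum_congr rfl fun k _ => this k]
      simp [ite_smul]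
    refine PiLp.ext fun j => ?_
    exact this j
  rw [LinearMap.sum_apply]
  have hterm : ∀ i, (adjoint (iota (W := W) (b i)) ∘ₗ M ∘ₗ iota (b i)) φ
      = ∑ j, ∑ k, (((b i j : ℝ):ℂ) * ((b i k : ℝ):ℂ)) • (M (iota (EuclideanSpace.single k 1) φ)) j := by
    intro i
    rw [LinearMap.comp_apply, LinearMap.comp_apply, hiota (b i), map_sum, adjoint_iota_apply]
    refine Finset.sum_congr rfl fun j _ => ?_
    rw [pilp_sum_apply, Finset.smul_sum]
    refine Finset.sum_congr rfl fun k _ => ?_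
    rw [map_smul]
    show ((b i j : ℝ):ℂ) • (((b i k : ℝ):ℂ) • M (iota (EuclideanSpace.single k 1) φ)) j = _
    rw [PiLp.smul_apply, smul_smul]
  rw [Finset.sum_congr rfl fun i _ => hterm i, Finset.sum_comm]
  have h2 : ∀ j, ∑ i, ∑ k, (((b i j : ℝ):ℂ) * ((b i k : ℝ):ℂ)) • (M (iota (EuclideanSpace.single k 1) φ)) j
      = ∑ k, (if j = k then (1:ℂ) else 0) • (M (iota (EuclideanSpace.single k 1) φ)) j := by
    intro j
    rw [Finset.sum_comm]
    exact Finset.sum_congr rfl fun k _ => by rw [← Finset.sum_smul, onb_delta_c]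
  rw [Finset.sum_congr rfl fun j _ => h2 j]
  refine Finset.sum_congr rfl fun j _ => ?_
  simp [ite_smul]


lemma eucl_sum_apply {ι' : Type*} (s : Finset ι') (F : ι' → EuclideanSpace ℝ (Fin n))
    (j : Fin n) : (∑ i ∈ s, F i) j = ∑ i ∈ s, F i j :=
  map_sum (PiLp.projₗ 2 (fun _ : Fin n => ℝ) (𝕜 := ℝ) j) F s

lemma eucl_expand (t : EuclideanSpace ℝ (Fin n) ≃ₗᵢ[ℝ] EuclideanSpace ℝ (Fin n))
    (X : EuclideanSpace ℝ (Fin n)) (i : Fin n) :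
    t X i = ∑ k, X k * t (EuclideanSpace.single k 1) i := by
  have hX : X = ∑ k, X k • (EuclideanSpace.single k 1 : EuclideanSpace ℝ (Fin n)) := by
    refine PiLp.ext fun j => ?_
    rw [eucl_sum_apply]
    simp [EuclideanSpace.single_apply, Finset.sum_ite_eq]
  conv_lhs => rw [hX]
  rw [map_sum, eucl_sum_apply]
  refine Finset.sum_congr rfl fun k _ => ?_
  rw [map_smul]
  simp [PiLp.smul_apply, smul_eq_mul]

/-- the tensor action map on `PiLp 2 (fun _ => W)`. -/
def Umap (R : W ≃ₗᵢ[ℂ] W) (t : EuclideanSpace ℝ (Fin n) ≃ₗᵢ[ℝ] EuclideanSpace ℝ (Fin n)) :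
    PiLp 2 (fun _ : Fin n => W) →ₗ[ℂ] PiLp 2 (fun _ : Fin n => W) :=
  (WithLp.linearEquiv 2 ℂ (∀ _ : Fin n, W)).symm.toLinearMap ∘ₗ
    LinearMap.pi (fun i => ∑ k, ((t (EuclideanSpace.single k 1) i : ℝ) : ℂ) •
      (R.toLinearMap ∘ₗ PiLp.projₗ 2 (fun _ : Fin n => W) k))

lemma Umap_apply (R : W ≃ₗᵢ[ℂ] W) (t : EuclideanSpace ℝ (Fin n) ≃ₗᵢ[ℝ] EuclideanSpace ℝ (Fin n))
    (f : PiLp 2 (fun _ : Fin n => W)) (i : Fin n) :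
    Umap R t f i = ∑ k, ((t (EuclideanSpace.single k 1) i : ℝ) : ℂ) • R (f k) := by
  simp [Umap, LinearMap.pi_apply, LinearMap.sum_apply]

lemma Umap_eq (R : W ≃ₗᵢ[ℂ] W) (t : EuclideanSpace ℝ (Fin n) ≃ₗᵢ[ℝ] EuclideanSpace ℝ (Fin n))
    (f : PiLp 2 (fun _ : Fin n => W)) :
    Umap R t f = (WithLp.equiv 2 (∀ _ : Fin n, W)).symm
      (fun i => ∑ k, ((t (EuclideanSpace.single k 1) i : ℝ) : ℂ) •
        R ((WithLp.equiv 2 (∀ _ : Fin n, W)) f k)) := by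
  refine PiLp.ext fun i => ?_
  rw [Umap_apply]
  rfl

lemma Umap_iota (R : W ≃ₗᵢ[ℂ] W) (t : EuclideanSpace ℝ (Fin n) ≃ₗᵢ[ℝ] EuclideanSpace ℝ (Fin n))
    (X : EuclideanSpace ℝ (Fin n)) (φ : W) :
    Umap R t (iota X φ) = iota (t X) (R φ) := by
  refine PiLp.ext fun i => ?_
  rw [Umap_apply, iota_apply, eucl_expand t X]
  push_cast
  rw [Finset.sum_smul]
  refine Finset.sum_congr rfl fun k _ => ?_
  rw [iota_apply, map_smul, smul_smul, mul_comm]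


section Group
variable {G : Type*} [Group G]

lemma rep_inv_apply {𝕜 E : Type*} [RCLike 𝕜] [NormedAddCommGroup E] [InnerProductSpace 𝕜 E]
    (ρ : G →* (E ≃ₗᵢ[𝕜] E)) (g : G) (x : E) : ρ g⁻¹ (ρ g x) = x := by
  have h : ρ g⁻¹ * ρ g = 1 := by rw [← map_mul, inv_mul_cancel, map_one]
  calc ρ g⁻¹ (ρ g x) = (ρ g⁻¹ * ρ g) x := rfl
    _ = x := by rw [h]; rfl

lemma inner_rep {𝕜 E : Type*} [RCLike 𝕜] [NormedAddCommGroup E] [InnerProductSpace 𝕜 E]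
    (ρ : G →* (E ≃ₗᵢ[𝕜] E)) (g : G) (x y : E) :
    (inner 𝕜 (ρ g x) y : 𝕜) = inner 𝕜 x (ρ g⁻¹ y) := by
  conv_lhs => rw [show y = ρ g (ρ g⁻¹ y) by
    have := rep_inv_apply ρ g⁻¹ y; rw [inv_inv] at this; exact this.symm]
  rw [LinearIsometryEquiv.inner_map_map]

lemma adjoint_rep {E : Type*} [NormedAddCommGroup E] [InnerProductSpace ℂ E]
    [FiniteDimensional ℂ E] (ρ : G →* (E ≃ₗᵢ[ℂ] E)) (g : G) :
    adjoint (ρ g).toLinearMap = (ρ g⁻¹).toLinearMap := by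
  symm
  rw [LinearMap.eq_adjoint_iff]
  intro x y
  have := inner_rep ρ g⁻¹ x y
  rwa [inv_inv] at this

lemma coeff_rel (τ : G →* (EuclideanSpace ℝ (Fin n) ≃ₗᵢ[ℝ] EuclideanSpace ℝ (Fin n)))
    (g : G) (i k : Fin n) :
    τ g⁻¹ (EuclideanSpace.single i 1) k = τ g (EuclideanSpace.single k 1) i := by
  have h1 : τ g⁻¹ (EuclideanSpace.single i 1) k
      = (inner ℝ (τ g⁻¹ (EuclideanSpace.single i 1)) (EuclideanSpace.single k 1) : ℝ) := by
    rw [EuclideanSpace.inner_single_right]; simp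
  have h2 : τ g (EuclideanSpace.single k 1) i
      = (inner ℝ (τ g (EuclideanSpace.single k 1)) (EuclideanSpace.single i 1) : ℝ) := by
    rw [EuclideanSpace.inner_single_right]; simp
  rw [h1, h2, inner_rep τ g⁻¹, inv_inv, real_inner_comm]

lemma adjoint_Umap (ρ : G →* (W ≃ₗᵢ[ℂ] W))
    (τ : G →* (EuclideanSpace ℝ (Fin n) ≃ₗᵢ[ℝ] EuclideanSpace ℝ (Fin n))) (g : G) :
    adjoint (Umap (W := W) (ρ g) (τ g)) = Umap (ρ g⁻¹) (τ g⁻¹) := by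
  symm
  rw [LinearMap.eq_adjoint_iff]
  intro x y
  rw [PiLp.inner_apply, PiLp.inner_apply]
  have hL : ∀ i, (inner ℂ (Umap (W := W) (ρ g⁻¹) (τ g⁻¹) x i) (y i) : ℂ)
      = ∑ k, ((τ g⁻¹ (EuclideanSpace.single k 1) i : ℝ) : ℂ) * inner ℂ (ρ g⁻¹ (x k)) (y i) := by
    intro i
    rw [Umap_apply, sum_inner]
    refine Finset.sum_congr rfl fun k _ => ?_
    rw [inner_smul_left, Complex.conj_ofReal]
  have hR : ∀ k, (inner ℂ (x k) (Umap (W := W) (ρ g) (τ g) y k) : ℂ)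
      = ∑ i, ((τ g (EuclideanSpace.single i 1) k : ℝ) : ℂ) * inner ℂ (x k) (ρ g (y i)) := by
    intro k
    rw [Umap_apply, inner_sum]
    refine Finset.sum_congr rfl fun i _ => ?_
    rw [inner_smul_right]
  rw [Finset.sum_congr rfl fun i _ => hL i, Finset.sum_congr rfl fun k _ => hR k,
    Finset.sum_comm]
  refine Finset.sum_congr rfl fun k _ => Finset.sum_congr rfl fun i _ => ?_
  rw [coeff_rel τ g k i]
  congr 1
  have := inner_rep ρ g⁻¹ (x k) (y i)
  rwa [inv_inv] at this


lemma schur (ρ : G →* (W ≃ₗᵢ[ℂ] W))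
    (hirr : ∀ q : Submodule ℂ W, (∀ g : G, q.map (ρ g).toLinearMap ≤ q) → q = ⊥ ∨ q = ⊤)
    (hpos : 0 < Module.finrank ℂ W) (A : W →ₗ[ℂ] W)
    (hcomm : ∀ (g : G) (x : W), A (ρ g x) = ρ g (A x)) :
    A = (LinearMap.trace ℂ W A / (Module.finrank ℂ W : ℂ)) • LinearMap.id := by
  have hnt : Nontrivial W := Module.nontrivial_of_finrank_pos hpos
  obtain ⟨μ, hμ⟩ := Module.End.exists_eigenvalue (A : Module.End ℂ W)
  have hinv : ∀ g : G, (Module.End.eigenspace A μ).map (ρ g).toLinearMap ≤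
      Module.End.eigenspace A μ := by
    intro g y hy
    obtain ⟨x, hx, rfl⟩ := hy
    have hx' : A x = μ • x := Module.End.mem_eigenspace_iff.mp hx
    refine Module.End.mem_eigenspace_iff.mpr ?_
    show A (ρ g x) = μ • (ρ g x)
    rw [hcomm g x, hx', map_smul]
  have htop : Module.End.eigenspace A μ = ⊤ := by
    rcases hirr _ hinv with h | h
    · exact absurd h hμ
    · exact h
  have hA : A = μ • LinearMap.id := by
    apply LinearMap.ext
    intro x
    have hx : x ∈ Module.End.eigenspace A μ := htop ▸ Submodule.mem_top
    rw [Module.End.mem_eigenspace_iff] at hx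
    simpa using hx
  rw [hA]
  have htr : LinearMap.trace ℂ W (μ • (LinearMap.id : W →ₗ[ℂ] W))
      = μ * Module.finrank ℂ W := by simp
  rw [htr, mul_div_assoc, div_self, mul_one]
  exact_mod_cast hpos.ne'

end Group

end
end CliffordAux

open CliffordAux LinearMap

set_option maxHeartbeats 2000000 in
/-- Relative dimension formulas for Clifford homomorphisms.  Let `(ρ, Wρ)` be an
irreducible unitary representation of a group `G` (e.g. `Spin(n)`), acting also
orthogonally on `ℝⁿ` (via `τ`), and let `Wlam` be an irreducible summand of `Wρ ⊗ ℂⁿ`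
(modelled as `PiLp 2 (Fin n → Wρ)`, with `φ ⊗ X = fun i => Xᵢ • φ`) with equivariant
orthogonal projection `Pr` (so `Pr ∘ Pr* = Id`).  With `p_λ(X)φ := Pr(φ ⊗ X)`, for any
orthonormal basis `{eᵢ}` of `ℝⁿ`:
(1) `Σᵢ p_λ(eᵢ)* p_λ(eᵢ) = (dim Wlam / dim Wρ)·Id` on `Wρ`, and
(2) `Σᵢ p_λ(eᵢ) p_λ(eᵢ)* = Id` on `Wlam`. -/
theorem clifford_relative_dimension_formula (n : ℕ) (G : Type*) [Group G]
    (Wρ Wlam : Type*)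
    [NormedAddCommGroup Wρ] [InnerProductSpace ℂ Wρ] [FiniteDimensional ℂ Wρ]
    [NormedAddCommGroup Wlam] [InnerProductSpace ℂ Wlam] [FiniteDimensional ℂ Wlam]
    (hρpos : 0 < Module.finrank ℂ Wρ)
    (ρ : G →* (Wρ ≃ₗᵢ[ℂ] Wρ)) (lam : G →* (Wlam ≃ₗᵢ[ℂ] Wlam))
    (τ : G →* (EuclideanSpace ℝ (Fin n) ≃ₗᵢ[ℝ] EuclideanSpace ℝ (Fin n)))
    (hρirr : ∀ q : Submodule ℂ Wρ, (∀ g : G, q.map (ρ g).toLinearMap ≤ q) → q = ⊥ ∨ q = ⊤)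
    (hlamirr : ∀ q : Submodule ℂ Wlam, (∀ g : G, q.map (lam g).toLinearMap ≤ q) → q = ⊥ ∨ q = ⊤)
    (Pr : (PiLp 2 fun _ : Fin n => Wρ) →ₗ[ℂ] Wlam)
    (hcoiso : Pr ∘ₗ LinearMap.adjoint Pr = LinearMap.id)
    (hequiv : ∀ (g : G) (f : PiLp 2 fun _ : Fin n => Wρ),
      Pr ((WithLp.equiv 2 (∀ _ : Fin n, Wρ)).symm
        (fun i => ∑ k, (((τ g (EuclideanSpace.single k 1)) i : ℝ) : ℂ) •
          ρ g ((WithLp.equiv 2 (∀ _ : Fin n, Wρ)) f k)))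
      = lam g (Pr f))
    (p : EuclideanSpace ℝ (Fin n) → Wρ →ₗ[ℂ] Wlam)
    (hp : ∀ X φ, p X φ = Pr ((WithLp.equiv 2 (∀ _ : Fin n, Wρ)).symm
      (fun i => ((X i : ℝ) : ℂ) • φ))) :
    ∀ b : OrthonormalBasis (Fin n) ℝ (EuclideanSpace ℝ (Fin n)),
      (∑ i, LinearMap.adjoint (p (b i)) ∘ₗ p (b i)
        = (((Module.finrank ℂ Wlam : ℂ)) / ((Module.finrank ℂ Wρ : ℂ))) • LinearMap.id) ∧
      (∑ i, p (b i) ∘ₗ LinearMap.adjoint (p (b i)) = LinearMap.id) := by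
  intro b
  have hpmap : ∀ X : EuclideanSpace ℝ (Fin n), p X = Pr ∘ₗ iota X := by
    intro X
    apply LinearMap.ext
    intro φ
    rw [hp X φ]
    rfl
  set Q : (PiLp 2 fun _ : Fin n => Wρ) →ₗ[ℂ] (PiLp 2 fun _ : Fin n => Wρ) :=
    adjoint Pr ∘ₗ Pr with hQ
  -- `hequiv` as an equality of linear maps
  have hPrU : ∀ g : G, Pr ∘ₗ Umap (ρ g) (τ g) = (lam g).toLinearMap ∘ₗ Pr := by
    intro g
    apply LinearMap.ext
    intro f
    show Pr (Umap (ρ g) (τ g) f) = lam g (Pr f)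
    rw [Umap_eq]
    exact hequiv g f
  have hUPr : ∀ g : G, Umap (ρ g) (τ g) ∘ₗ adjoint Pr = adjoint Pr ∘ₗ (lam g).toLinearMap := by
    intro g
    have h := congrArg adjoint (hPrU g⁻¹)
    rw [adjoint_comp, adjoint_comp, adjoint_Umap ρ τ g⁻¹, inv_inv, adjoint_rep lam g⁻¹,
      inv_inv] at h
    exact h
  have hUQ : ∀ g : G, Q ∘ₗ Umap (ρ g) (τ g) = Umap (ρ g) (τ g) ∘ₗ Q := by
    intro g
    calc Q ∘ₗ Umap (ρ g) (τ g) = adjoint Pr ∘ₗ (Pr ∘ₗ Umap (ρ g) (τ g)) := rfl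
      _ = adjoint Pr ∘ₗ ((lam g).toLinearMap ∘ₗ Pr) := by rw [hPrU g]
      _ = (adjoint Pr ∘ₗ (lam g).toLinearMap) ∘ₗ Pr := rfl
      _ = (Umap (ρ g) (τ g) ∘ₗ adjoint Pr) ∘ₗ Pr := by rw [hUPr g]
      _ = Umap (ρ g) (τ g) ∘ₗ Q := rfl
  constructor
  · -- part 1
    set A : Wρ →ₗ[ℂ] Wρ := ∑ i, adjoint (iota (b i)) ∘ₗ (Q ∘ₗ iota (b i)) with hA
    have hsum : ∑ i, adjoint (p (b i)) ∘ₗ p (b i) = A := by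
      refine Finset.sum_congr rfl fun i _ => ?_
      rw [hpmap (b i), adjoint_comp]
      rfl
    -- equivariance of A
    have hcomm : ∀ (g : G) (φ : Wρ), A (ρ g φ) = ρ g (A φ) := by
      intro g φ
      set c : OrthonormalBasis (Fin n) ℝ (EuclideanSpace ℝ (Fin n)) := b.map (τ g⁻¹) with hc
      have hterm : ∀ i, (adjoint (iota (b i)) ∘ₗ (Q ∘ₗ iota (b i))) ∘ₗ (ρ g).toLinearMap
          = (ρ g).toLinearMap ∘ₗ (adjoint (iota (c i)) ∘ₗ (Q ∘ₗ iota (c i))) := by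
        intro i
        have hbc : τ g (c i) = b i := by
          rw [hc, OrthonormalBasis.map_apply]
          have := rep_inv_apply τ g⁻¹ (b i)
          rwa [inv_inv] at this
        have h1 : iota (b i) ∘ₗ (ρ g).toLinearMap
            = Umap (ρ g) (τ g) ∘ₗ iota (W := Wρ) (c i) := by
          apply LinearMap.ext; intro φ'
          show iota (b i) (ρ g φ') = Umap (ρ g) (τ g) (iota (c i) φ')
          rw [Umap_iota, hbc]
        have h2 : Umap (ρ g⁻¹) (τ g⁻¹) ∘ₗ iota (W := Wρ) (b i)
            = iota (c i) ∘ₗ (ρ g⁻¹).toLinearMap := by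
          apply LinearMap.ext; intro φ'
          show Umap (ρ g⁻¹) (τ g⁻¹) (iota (b i) φ') = iota (c i) (ρ g⁻¹ φ')
          rw [Umap_iota, hc, OrthonormalBasis.map_apply]
        have h3 : adjoint (iota (W := Wρ) (b i)) ∘ₗ Umap (ρ g) (τ g)
            = (ρ g).toLinearMap ∘ₗ adjoint (iota (c i)) := by
          have := congrArg adjoint h2
          rw [adjoint_comp, adjoint_comp, adjoint_Umap ρ τ g⁻¹, inv_inv,
            adjoint_rep ρ g⁻¹, inv_inv] at this
          exact this
        calc (adjoint (iota (b i)) ∘ₗ (Q ∘ₗ iota (b i))) ∘ₗ (ρ g).toLinearMap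
            = adjoint (iota (b i)) ∘ₗ (Q ∘ₗ (iota (b i) ∘ₗ (ρ g).toLinearMap)) := rfl
          _ = adjoint (iota (b i)) ∘ₗ (Q ∘ₗ (Umap (ρ g) (τ g) ∘ₗ iota (c i))) := by rw [h1]
          _ = adjoint (iota (b i)) ∘ₗ ((Q ∘ₗ Umap (ρ g) (τ g)) ∘ₗ iota (c i)) := rfl
          _ = adjoint (iota (b i)) ∘ₗ ((Umap (ρ g) (τ g) ∘ₗ Q) ∘ₗ iota (c i)) := by
              rw [hUQ g]
          _ = (adjoint (iota (b i)) ∘ₗ Umap (ρ g) (τ g)) ∘ₗ (Q ∘ₗ iota (c i)) := rfl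
          _ = ((ρ g).toLinearMap ∘ₗ adjoint (iota (c i))) ∘ₗ (Q ∘ₗ iota (c i)) := by rw [h3]
          _ = (ρ g).toLinearMap ∘ₗ (adjoint (iota (c i)) ∘ₗ (Q ∘ₗ iota (c i))) := rfl
      have hAc : (∑ i, adjoint (iota (W := Wρ) (c i)) ∘ₗ (Q ∘ₗ iota (c i))) φ = A φ := by
        rw [sum_adjoint_comp_M_comp_iota c Q φ, hA, sum_adjoint_comp_M_comp_iota b Q φ]
      calc A (ρ g φ) = (∑ i, (adjoint (iota (b i)) ∘ₗ (Q ∘ₗ iota (b i)))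
            ∘ₗ (ρ g).toLinearMap) φ := by
            rw [hA]; rw [LinearMap.sum_apply, LinearMap.sum_apply]; rfl
        _ = (∑ i, (ρ g).toLinearMap ∘ₗ (adjoint (iota (c i)) ∘ₗ (Q ∘ₗ iota (c i)))) φ := by
            rw [Finset.sum_congr rfl fun i _ => hterm i]
        _ = ρ g ((∑ i, adjoint (iota (c i)) ∘ₗ (Q ∘ₗ iota (c i))) φ) := by
            rw [LinearMap.sum_apply, LinearMap.sum_apply, map_sum]
            rfl
        _ = ρ g (A φ) := by rw [hAc]
    have hschur := schur ρ hρirr hρpos A hcomm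
    -- trace of A
    have htrace : LinearMap.trace ℂ Wρ A = (Module.finrank ℂ Wlam : ℂ) := by
      rw [hA, map_sum]
      have h1 : ∀ i, LinearMap.trace ℂ Wρ (adjoint (iota (W := Wρ) (b i)) ∘ₗ (Q ∘ₗ iota (b i)))
          = LinearMap.trace ℂ (PiLp 2 fun _ : Fin n => Wρ)
              (Q ∘ₗ (iota (b i) ∘ₗ adjoint (iota (b i)))) := by
        intro i
        rw [LinearMap.trace_comp_comm' (Q ∘ₗ iota (b i)) (adjoint (iota (b i)))]
        rfl
      rw [Finset.sum_congr rfl fun i _ => h1 i]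
      have h2 : ∑ i, LinearMap.trace ℂ (PiLp 2 fun _ : Fin n => Wρ)
            (Q ∘ₗ (iota (b i) ∘ₗ adjoint (iota (b i))))
          = LinearMap.trace ℂ (PiLp 2 fun _ : Fin n => Wρ)
            (Q ∘ₗ ∑ i, (iota (b i) ∘ₗ adjoint (iota (b i)))) := by
        rw [← map_sum]
        congr 1
        apply LinearMap.ext
        intro f
        simp [LinearMap.sum_apply]
      rw [h2, sum_iota_comp_adjoint b, LinearMap.comp_id, hQ,
        LinearMap.trace_comp_comm' Pr (adjoint Pr), hcoiso, LinearMap.trace_id]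
    rw [hsum, hschur, htrace]
  · -- part 2
    have h1 : ∀ i, p (b i) ∘ₗ adjoint (p (b i))
        = Pr ∘ₗ ((iota (b i) ∘ₗ adjoint (iota (W := Wρ) (b i))) ∘ₗ adjoint Pr) := by
      intro i
      rw [hpmap (b i), adjoint_comp]
      rfl
    rw [Finset.sum_congr rfl fun i _ => h1 i]
    have h2 : ∑ i, Pr ∘ₗ ((iota (b i) ∘ₗ adjoint (iota (W := Wρ) (b i))) ∘ₗ adjoint Pr)
        = Pr ∘ₗ ((∑ i, iota (b i) ∘ₗ adjoint (iota (W := Wρ) (b i))) ∘ₗ adjoint Pr) := by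
      apply LinearMap.ext
      intro f
      simp [LinearMap.sum_apply]
    rw [h2, sum_iota_comp_adjoint b, LinearMap.id_comp, hcoiso]
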